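/- Let d ≥ 2, let {𝒫^(b)}_{b=1}^{d+1} be a set of d+1 mutually unbiased measurements on ℂ^d with efficiency parameter κ, let ρ be a density operator on ℂ^d, and let α ≥ 2 be a real number. Then (1/(d+1)) Σ_{b=1}^{d+1} R_α(𝒫^(b)|ρ) ≥ (α/(2(1−α))) · ln(C(κ,ρ)/(d+1)), where C(κ,ρ) = Σ_{b=1}^{d+1} Σ_{n=1}^{d} (p_n^(b))². -/

import Mathlib

open Matrix Finset Real
open scoped ComplexOrder

/-- Sum of `t`-th powers bounded by `t`-th power of the sum, for `t ≥ 1`. -/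
lemma aux_sum_rpow_le {ι : Type*} (s : Finset ι) (a : ι → ℝ)
    (ha : ∀ i ∈ s, 0 ≤ a i) {t : ℝ} (ht : 1 ≤ t) :
    ∑ i ∈ s, a i ^ t ≤ (∑ i ∈ s, a i) ^ t := by
  have ht0 : 0 < t := lt_of_lt_of_le one_pos ht
  have hS : 0 ≤ ∑ i ∈ s, a i := Finset.sum_nonneg ha
  rcases eq_or_lt_of_le hS with hS0 | hS0
  · have hall : ∀ i ∈ s, a i = 0 := by
      intro i hi
      exact le_antisymm (by
        have := (Finset.sum_eq_zero_iff_of_nonneg ha).mp hS0.symm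
        exact (this i hi).le) (ha i hi)
    rw [← hS0, Real.zero_rpow ht0.ne']
    refine le_of_eq (Finset.sum_eq_zero fun i hi => ?_)
    rw [hall i hi, Real.zero_rpow ht0.ne']
  · calc ∑ i ∈ s, a i ^ t ≤ ∑ i ∈ s, a i * (∑ j ∈ s, a j) ^ (t - 1) := by
          refine Finset.sum_le_sum fun i hi => ?_
          rcases eq_or_lt_of_le (ha i hi) with h0 | h0
          · rw [← h0, Real.zero_rpow ht0.ne', zero_mul]
          · have hle : a i ≤ ∑ j ∈ s, a j := Finset.single_le_sum ha hi
            calc a i ^ t = a i ^ (1 + (t - 1)) := by ring_nf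
              _ = a i ^ (1:ℝ) * a i ^ (t - 1) := Real.rpow_add h0 1 (t-1)
              _ = a i * a i ^ (t - 1) := by rw [Real.rpow_one]
              _ ≤ a i * (∑ j ∈ s, a j) ^ (t - 1) := by
                  refine mul_le_mul_of_nonneg_left ?_ (ha i hi)
                  exact Real.rpow_le_rpow h0.le hle (by linarith)
      _ = (∑ i ∈ s, a i) * (∑ j ∈ s, a j) ^ (t - 1) := by rw [← Finset.sum_mul]
      _ = (∑ i ∈ s, a i) ^ t := by
          rw [← Real.rpow_one_add' hS0.le (by intro h; linarith)]
          ring_nf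

/-- trace of a PSD matrix is nonneg. -/
lemma aux_trace_nonneg {m : ℕ} {M : Matrix (Fin m) (Fin m) ℂ} (hM : M.PosSemidef) :
    0 ≤ M.trace := by
  rw [Matrix.trace]
  refine Finset.sum_nonneg fun i _ => ?_
  exact hM.diag_nonneg

theorem stmt9 (d : ℕ) (hd : 2 ≤ d) (κ : ℝ)
    (hκ1 : 1 / (d : ℝ) < κ) (hκ2 : κ ≤ 1)
    (P : Fin (d + 1) → Fin d → Matrix (Fin d) (Fin d) ℂ)
    (hpsd : ∀ b n, (P b n).PosSemidef)
    (hsum : ∀ b, ∑ n, P b n = 1)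
    (htr1 : ∀ b n, (P b n).trace = 1)
    (htr2 : ∀ b b', b ≠ b' → ∀ n n', (P b n * P b' n').trace = ((1 / (d : ℝ) : ℝ) : ℂ))
    (htr3 : ∀ b n n', (P b n * P b n').trace =
      if n = n' then ((κ : ℝ) : ℂ) else (((1 - κ) / ((d : ℝ) - 1) : ℝ) : ℂ))
    (ρ : Matrix (Fin d) (Fin d) ℂ) (hρ : ρ.PosSemidef) (hρtr : ρ.trace = 1)
    (p : Fin (d + 1) → Fin d → ℝ)
    (hp : ∀ b n, ((p b n : ℝ) : ℂ) = (P b n * ρ).trace)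
    (α : ℝ) (hα : 2 ≤ α) :
    (1 / ((d : ℝ) + 1)) * (∑ b, ((1 / (1 - α)) * Real.log (∑ n, (p b n) ^ α))) ≥
      (α / (2 * (1 - α))) * Real.log ((∑ b, ∑ n, (p b n) ^ 2) / ((d : ℝ) + 1)) := by
  -- nonnegativity of probabilities
  have hpnn : ∀ b n, 0 ≤ p b n := by
    intro b n
    obtain ⟨S, hherm, hSS⟩ : ∃ S : Matrix (Fin d) (Fin d) ℂ, S.conjTranspose = S ∧ S * S = ρ := by
      open scoped MatrixOrder in
      exact ⟨CFC.sqrt ρ, (Matrix.nonneg_iff_posSemidef.mp (CFC.sqrt_nonneg ρ)).1,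
        CFC.sqrt_mul_sqrt_self ρ (Matrix.nonneg_iff_posSemidef.mpr hρ)⟩
    have hpsd' : (S * P b n * S).PosSemidef := by
      have := (hpsd b n).mul_mul_conjTranspose_same S
      rwa [hherm] at this
    have htr : (P b n * ρ).trace = (S * P b n * S).trace := by
      conv_lhs => rw [← hSS]
      rw [← Matrix.mul_assoc, Matrix.trace_mul_cycle]
    have h0 : (0:ℂ) ≤ ((p b n : ℝ) : ℂ) := by
      rw [hp b n, htr]; exact aux_trace_nonneg hpsd'
    exact_mod_cast h0
  -- probabilities sum to 1
  have hpsum : ∀ b, ∑ n, p b n = 1 := by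
    intro b
    have : ((∑ n, p b n : ℝ) : ℂ) = 1 := by
      push_cast
      rw [Finset.sum_congr rfl fun n _ => hp b n, ← Matrix.trace_sum, ← Matrix.sum_mul, hsum b, one_mul, hρtr]
    exact_mod_cast this
  -- positivity of the quadratic sums
  have hQpos : ∀ b, 0 < ∑ n, (p b n) ^ 2 := by
    intro b
    obtain ⟨n, hn'⟩ : ∃ n, 0 < p b n := by
      by_contra h; push_neg at h
      have : ∑ n, p b n ≤ 0 := Finset.sum_nonpos fun n _ => h n
      rw [hpsum b] at this; linarith
    refine Finset.sum_pos' (fun i _ => sq_nonneg _) ⟨n, Finset.mem_univ n, by positivity⟩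
  have hα1 : 1 - α < 0 := by linarith
  have hinvneg : 1 / (1 - α) < 0 := div_neg_of_pos_of_neg one_pos hα1
  have hne : (1 - α) ≠ 0 := by linarith
  have hcneg : α / (2 * (1 - α)) ≤ 0 :=
    div_nonpos_of_nonneg_of_nonpos (by linarith) (by nlinarith)
  have hαpos : 0 < α := by linarith
  -- positivity of the rpow sums
  have hSpos : ∀ b, 0 < ∑ n, (p b n) ^ α := by
    intro b
    obtain ⟨n, hn'⟩ : ∃ n, 0 < p b n := by
      by_contra h; push_neg at h
      have : ∑ n, p b n ≤ 0 := Finset.sum_nonpos fun n _ => h n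
      rw [hpsum b] at this; linarith
    refine Finset.sum_pos' (fun i _ => Real.rpow_nonneg (hpnn b i) _)
      ⟨n, Finset.mem_univ n, Real.rpow_pos_of_pos hn' _⟩
  -- key per-b inequality : log S_b ≤ (α/2) log Q_b
  have hkey : ∀ b, Real.log (∑ n, (p b n) ^ α) ≤ (α/2) * Real.log (∑ n, (p b n) ^ 2) := by
    intro b
    have hle : ∑ n, (p b n) ^ α ≤ (∑ n, (p b n) ^ 2) ^ (α/2) := by
      have := aux_sum_rpow_le Finset.univ (fun n => (p b n) ^ 2)
        (fun n _ => sq_nonneg _) (t := α/2) (by linarith)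
      refine le_trans (le_of_eq (Finset.sum_congr rfl fun n _ => ?_)) this
      show p b n ^ α = (p b n ^ 2) ^ (α/2)
      rw [← Real.rpow_natCast (p b n) 2, ← Real.rpow_mul (hpnn b n)]
      congr 1
      push_cast; ring
    calc Real.log (∑ n, (p b n) ^ α) ≤ Real.log ((∑ n, (p b n) ^ 2) ^ (α/2)) :=
          Real.log_le_log (hSpos b) hle
      _ = (α/2) * Real.log (∑ n, (p b n) ^ 2) := Real.log_rpow (hQpos b) _
  -- per-b inequality with negative factor
  have hstep : ∀ b : Fin (d+1), (α / (2 * (1 - α))) * Real.log (∑ n, (p b n) ^ 2) ≤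
      (1 / (1 - α)) * Real.log (∑ n, (p b n) ^ α) := by
    intro b
    have := mul_le_mul_of_nonpos_left (hkey b) (le_of_lt hinvneg)
    have hc : α / (2 * (1 - α)) = 1/(1-α) * (α/2) := by
      field_simp
    calc (α / (2 * (1 - α))) * Real.log (∑ n, (p b n) ^ 2)
        = (1 / (1 - α)) * ((α/2) * Real.log (∑ n, (p b n) ^ 2)) := by
          rw [hc, mul_assoc]
      _ ≤ (1 / (1 - α)) * Real.log (∑ n, (p b n) ^ α) := this
  -- Jensen for log
  have hwpos : (0:ℝ) < (d:ℝ) + 1 := by positivity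
  have hjensen : ∑ b : Fin (d+1), (1 / ((d:ℝ)+1)) * Real.log (∑ n, (p b n) ^ 2) ≤
      Real.log ((∑ b, ∑ n, (p b n) ^ 2) / ((d:ℝ)+1)) := by
    have hconc : ConcaveOn ℝ (Set.Ioi 0) Real.log := strictConcaveOn_log_Ioi.concaveOn
    have hw : ∑ _b : Fin (d+1), (1 / ((d:ℝ)+1)) = 1 := by
      simp [Finset.sum_const, Finset.card_univ]
      field_simp
    have := hconc.le_map_sum (t := Finset.univ) (w := fun _ => 1 / ((d:ℝ)+1))
      (p := fun b => ∑ n, (p b n) ^ 2)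
      (fun b _ => by positivity) hw (fun b _ => hQpos b)
    simp only [smul_eq_mul] at this
    refine this.trans (le_of_eq ?_)
    congr 1
    rw [← Finset.mul_sum, one_div, inv_mul_eq_div]
  -- combine
  calc (α / (2 * (1 - α))) * Real.log ((∑ b, ∑ n, (p b n) ^ 2) / ((d : ℝ) + 1))
      ≤ (α / (2 * (1 - α))) * ∑ b : Fin (d+1), (1 / ((d:ℝ)+1)) * Real.log (∑ n, (p b n) ^ 2) :=
        mul_le_mul_of_nonpos_left hjensen hcneg
    _ = ∑ b : Fin (d+1), (1 / ((d:ℝ)+1)) * ((α / (2 * (1 - α))) * Real.log (∑ n, (p b n) ^ 2)) := by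
        rw [Finset.mul_sum]; exact Finset.sum_congr rfl fun b _ => by ring
    _ ≤ ∑ b : Fin (d+1), (1 / ((d:ℝ)+1)) * ((1 / (1 - α)) * Real.log (∑ n, (p b n) ^ α)) :=
        Finset.sum_le_sum fun b _ => mul_le_mul_of_nonneg_left (hstep b) (by positivity)
    _ = (1 / ((d : ℝ) + 1)) * (∑ b, ((1 / (1 - α)) * Real.log (∑ n, (p b n) ^ α))) := by
        rw [Finset.mul_sum]
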